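/- Second-order expansion of the H^p norm of 1+εz: for every p > 0, lim_{ε→0⁺} [ (∫_𝕋 |1+εz|^p dμ(z))^{2/p} − 1 ] / ε² = p/2, where μ is normalized Lebesgue measure on the unit circle 𝕋. -/

import Mathlib

open Real Filter Set

noncomputable def HPb (c t : ℝ) : ℝ := 1 + 2*t*c + t^2
noncomputable def HPF (p c t : ℝ) : ℝ := HPb c t ^ (p/2)
noncomputable def HPF1 (p c t : ℝ) : ℝ := p * (c + t) * HPb c t ^ (p/2 - 1)
noncomputable def HPF2 (p c t : ℝ) : ℝ :=
  p * HPb c t ^ (p/2 - 1) + p*(p-2)*(c+t)^2 * HPb c t ^ (p/2 - 2)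

lemma HPb_pos {c t : ℝ} (hc : |c| ≤ 1) (ht : |t| < 1) : 0 < HPb c t := by
  have h1 : -(2*|t|) ≤ 2*t*c := by
    have : |2*t*c| ≤ 2*|t| := by
      rw [abs_mul, abs_mul, abs_two]
      have := abs_nonneg t
      nlinarith
    linarith [neg_abs_le (2*t*c), abs_le.mp this |>.1]
  have h2 : 0 < 1 - |t| := by linarith
  have h3 : t^2 = |t|^2 := (sq_abs t).symm
  have : 0 < (1 - |t|)^2 := by positivity
  unfold HPb; nlinarith

lemma HPb_deriv (c t : ℝ) : HasDerivAt (fun t => HPb c t) (2*c + 2*t) t := by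
  unfold HPb
  have h1 : HasDerivAt (fun t : ℝ => 2*t*c) (2*c) t := by
    simpa [mul_comm, mul_assoc] using ((hasDerivAt_id t).const_mul 2).mul_const c
  have h2 : HasDerivAt (fun t : ℝ => t^2) (2*t) t := by simpa using hasDerivAt_pow 2 t
  exact (h1.const_add 1).add h2

lemma HPF_deriv {p c t : ℝ} (hb : 0 < HPb c t) :
    HasDerivAt (fun t => HPF p c t) (HPF1 p c t) t := by
  have h := (Real.hasDerivAt_rpow_const (x := HPb c t) (p := p/2) (Or.inl hb.ne')).comp t
    (HPb_deriv c t)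
  have : HasDerivAt (fun t => HPF p c t) (p/2 * HPb c t ^ (p/2 - 1) * (2*c + 2*t)) t := h
  convert this using 1
  unfold HPF1; ring

lemma HPF1_deriv {p c t : ℝ} (hb : 0 < HPb c t) :
    HasDerivAt (fun t => HPF1 p c t) (HPF2 p c t) t := by
  have h1 : HasDerivAt (fun t : ℝ => p*(c + t)) p t := by
    simpa using ((hasDerivAt_id t).const_add c).const_mul p
  have h2 : HasDerivAt (fun t => HPb c t ^ (p/2 - 1))
      ((p/2 - 1) * HPb c t ^ (p/2 - 1 - 1) * (2*c + 2*t)) t :=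
    (Real.hasDerivAt_rpow_const (x := HPb c t) (p := p/2 - 1) (Or.inl hb.ne')).comp t
      (HPb_deriv c t)
  have h := h1.mul h2
  have he : p/2 - 1 - 1 = p/2 - 2 := by ring
  rw [he] at h
  exact h.congr_deriv (by unfold HPF2; ring)

lemma HPF2_zero (p c : ℝ) : HPF2 p c 0 = p + p*(p-2)*c^2 := by
  have : HPb c 0 = 1 := by unfold HPb; ring
  simp [HPF2, this]

lemma HPF_zero (p c : ℝ) : HPF p c 0 = 1 := by
  have : HPb c 0 = 1 := by unfold HPb; ring
  simp [HPF, this]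

/-- double MVT: symmetric second difference equals `HPF2` at some interior point. -/
lemma HP_MVT {p c ε : ℝ} (hc : |c| ≤ 1) (hε : 0 < ε) (hε1 : ε < 1) :
    ∃ η, |η| < ε ∧ HPF p c ε + HPF p c (-ε) - 2 = HPF2 p c η * ε^2 := by
  set Ψ : ℝ → ℝ := fun t => HPF p c t + HPF p c (-t) with hΨ
  have hΨd : ∀ t : ℝ, |t| < 1 → HasDerivAt Ψ (HPF1 p c t - HPF1 p c (-t)) t := by
    intro t ht
    have h1 := HPF_deriv (p := p) (HPb_pos hc ht)
    have ht' : |(-t)| < 1 := by rwa [abs_neg]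
    have h2 : HasDerivAt (fun t => HPF p c (-t)) (HPF1 p c (-t) * (-1)) t :=
      (HPF_deriv (p := p) (HPb_pos hc ht')).comp t (hasDerivAt_neg t)
    have := h1.add h2
    exact this.congr_deriv (by ring)
  have hΨc : ContinuousOn Ψ (Icc 0 ε) := by
    intro t ht
    have : |t| < 1 := by
      rw [abs_lt]; constructor <;> [linarith [ht.1]; linarith [ht.2]]
    exact (hΨd t this).continuousAt.continuousWithinAt
  have hgc : ContinuousOn (fun t : ℝ => t^2) (Icc 0 ε) := (continuous_pow 2).continuousOn
  have hgg : ∀ x ∈ Ioo (0:ℝ) ε, HasDerivAt (fun t : ℝ => t^2) (2*x) x := by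
    intro x _; simpa using hasDerivAt_pow 2 x
  obtain ⟨ξ, hξ, hcauchy⟩ := exists_ratio_hasDerivAt_eq_ratio_slope Ψ
    (fun t => HPF1 p c t - HPF1 p c (-t)) hε hΨc
    (fun x hx => hΨd x (by rw [abs_lt]; exact ⟨by linarith [hx.1], by linarith [hx.2]⟩))
    (fun t : ℝ => t^2) (fun t => 2*t) hgc hgg
  -- hcauchy : (ε^2 - 0^2) * (HPF1 p c ξ - HPF1 p c (-ξ)) = (Ψ ε - Ψ 0) * (2*ξ)
  have hξ0 : 0 < ξ := hξ.1
  have hξε : ξ < ε := hξ.2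
  have hmvt2 : ∃ η ∈ Ioo (-ξ) ξ, HPF2 p c η = (HPF1 p c ξ - HPF1 p c (-ξ)) / (ξ - -ξ) := by
    apply exists_hasDerivAt_eq_slope (fun t => HPF1 p c t) (fun t => HPF2 p c t)
      (by linarith : -ξ < ξ)
    · intro t ht
      have : |t| < 1 := by rw [abs_lt]; exact ⟨by linarith [ht.1], by linarith [ht.2]⟩
      exact (HPF1_deriv (HPb_pos hc this)).continuousAt.continuousWithinAt
    · intro t ht
      have : |t| < 1 := by rw [abs_lt]; exact ⟨by linarith [ht.1], by linarith [ht.2]⟩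
      exact HPF1_deriv (HPb_pos hc this)
  obtain ⟨η, hη, hslope⟩ := hmvt2
  refine ⟨η, ?_, ?_⟩
  · rw [abs_lt]; exact ⟨by linarith [hη.1], by linarith [hη.2]⟩
  · have hΨ0 : Ψ 0 = 2 := by simp [hΨ, HPF_zero]; norm_num
    have h2ξ : ξ - -ξ ≠ 0 := by linarith
    have hs : HPF1 p c ξ - HPF1 p c (-ξ) = HPF2 p c η * (ξ - -ξ) := by
      field_simp at hslope; linarith [hslope]
    have hΨε : Ψ ε = HPF p c ε + HPF p c (-ε) := rfl
    rw [hs] at hcauchy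
    have hexp : HPF p c ε + HPF p c (-ε) - 2 = Ψ ε - Ψ 0 := by rw [hΨε, hΨ0]
    rw [hexp]
    have h2ξ' : (2*ξ) ≠ 0 := by positivity
    have := hcauchy
    -- (ε^2 - 0^2) * (HPF2 * (ξ - -ξ)) = (Ψ ε - Ψ 0) * (2ξ)
    field_simp at this
    nlinarith [this]

lemma HP_rpow_le {b : ℝ} (q : ℝ) (h1 : 1/4 ≤ b) (h2 : b ≤ 4) : b ^ q ≤ 4 ^ |q| := by
  rcases le_total 0 q with hq | hq
  · rw [abs_of_nonneg hq]; exact Real.rpow_le_rpow (by linarith) h2 hq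
  · rw [abs_of_nonpos hq]
    calc b ^ q ≤ (1/4 : ℝ) ^ q := Real.rpow_le_rpow_of_nonpos (by norm_num) h1 hq
      _ = 4 ^ (-q) := by
          rw [one_div, Real.inv_rpow (by norm_num), ← Real.rpow_neg (by norm_num)]

lemma HP_F2_bound {p c t : ℝ} (hp : 0 < p) (hc : |c| ≤ 1) (ht : |t| ≤ 1/2) :
    |HPF2 p c t| ≤ p * 4^|p/2-1| + p*|p-2| * 4 * 4^|p/2-2| := by
  have hc' := abs_le.mp hc
  have ht' := abs_le.mp ht
  have habs : -(2*|t|) ≤ 2*t*c ∧ 2*t*c ≤ 2*|t| := by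
    have : |2*t*c| ≤ 2*|t| := by
      rw [abs_mul, abs_mul, abs_two]
      have := abs_nonneg t
      nlinarith
    exact ⟨neg_le_of_neg_le (by linarith [neg_abs_le (2*t*c)]), le_trans (le_abs_self _) this⟩
  have ht2 : t^2 = |t|^2 := (sq_abs t).symm
  have hb1 : 1/4 ≤ HPb c t := by
    unfold HPb
    nlinarith [habs.1, sq_nonneg (1 - |t|), abs_nonneg t]
  have hb2 : HPb c t ≤ 4 := by
    unfold HPb
    nlinarith [habs.2, abs_nonneg t]
  have hq1 := HP_rpow_le (p/2 - 1) hb1 hb2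
  have hq2 := HP_rpow_le (p/2 - 2) hb1 hb2
  have hr1 : (0:ℝ) ≤ HPb c t ^ (p/2 - 1) := Real.rpow_nonneg (by linarith) _
  have hr2 : (0:ℝ) ≤ HPb c t ^ (p/2 - 2) := Real.rpow_nonneg (by linarith) _
  have hct : (c+t)^2 ≤ 4 := by nlinarith
  have hct0 : (0:ℝ) ≤ (c+t)^2 := sq_nonneg _
  unfold HPF2
  have e1 : |p * HPb c t ^ (p/2 - 1)| ≤ p * 4^|p/2-1| := by
    rw [abs_mul, abs_of_pos hp, abs_of_nonneg hr1]
    exact mul_le_mul_of_nonneg_left hq1 hp.le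
  have e2 : |p*(p-2)*(c+t)^2 * HPb c t ^ (p/2 - 2)| ≤ p*|p-2| * 4 * 4^|p/2-2| := by
    rw [abs_mul, abs_mul, abs_mul, abs_of_pos hp, abs_of_nonneg hct0, abs_of_nonneg hr2]
    have h40 : (0:ℝ) ≤ 4^|p/2-2| := Real.rpow_nonneg (by norm_num) _
    calc p * |p-2| * (c+t)^2 * (HPb c t ^ (p/2 - 2))
        ≤ p * |p-2| * 4 * (4^|p/2-2|) := by
          apply mul_le_mul (by
            apply mul_le_mul_of_nonneg_left hct
            positivity) hq2 hr2 (by positivity)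
      _ = p*|p-2| * 4 * 4^|p/2-2| := by ring
  calc |p * HPb c t ^ (p/2 - 1) + p*(p-2)*(c+t)^2 * HPb c t ^ (p/2 - 2)|
      ≤ |p * HPb c t ^ (p/2 - 1)| + |p*(p-2)*(c+t)^2 * HPb c t ^ (p/2 - 2)| := abs_add_le _ _
    _ ≤ p * 4^|p/2-1| + p*|p-2| * 4 * 4^|p/2-2| := add_le_add e1 e2

lemma HPF2_contAt {p c : ℝ} (hc : |c| ≤ 1) : ContinuousAt (fun t => HPF2 p c t) 0 := by
  have hb : (0:ℝ) < HPb c 0 := HPb_pos hc (by norm_num)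
  have hbc : ContinuousAt (fun t => HPb c t) 0 := (HPb_deriv c 0).continuousAt
  have h1 : ContinuousAt (fun t => HPb c t ^ (p/2 - 1)) 0 :=
    (Real.continuousAt_rpow_const _ _ (Or.inl hb.ne')).comp hbc
  have h2 : ContinuousAt (fun t => HPb c t ^ (p/2 - 2)) 0 :=
    (Real.continuousAt_rpow_const _ _ (Or.inl hb.ne')).comp hbc
  unfold HPF2
  exact (h1.const_mul p).add
    ((((continuousAt_const.add continuousAt_id).pow 2).const_mul (p*(p-2))).mul h2)

lemma HP_pointwise {p c : ℝ} (hc : |c| ≤ 1) :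
    Tendsto (fun ε => (HPF p c ε + HPF p c (-ε) - 2)/(2*ε^2)) (nhdsWithin 0 (Ioi 0))
      (nhds (HPF2 p c 0 / 2)) := by
  rw [Metric.tendsto_nhdsWithin_nhds]
  intro δ hδ
  obtain ⟨r, hr, hr'⟩ := Metric.continuousAt_iff.mp (HPF2_contAt (p := p) hc) δ hδ
  refine ⟨min r 1, lt_min hr one_pos, ?_⟩
  intro ε hε hdist
  have hε0 : 0 < ε := hε
  have hdist' : ε < min r 1 := by
    have := hdist; rw [Real.dist_eq, sub_zero, abs_of_pos hε0] at this; exact this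
  have hεr : ε < r := lt_of_lt_of_le hdist' (min_le_left _ _)
  have hε1 : ε < 1 := lt_of_lt_of_le hdist' (min_le_right _ _)
  obtain ⟨η, hη, heq⟩ := HP_MVT (p := p) hc hε0 hε1
  have hεne : ε ≠ 0 := hε0.ne'
  have : (HPF p c ε + HPF p c (-ε) - 2)/(2*ε^2) = HPF2 p c η / 2 := by
    rw [heq]; field_simp
  rw [this]
  have hηr : dist η 0 < r := by
    rw [Real.dist_eq, sub_zero]; exact lt_trans hη hεr
  have := hr' hηr
  rw [Real.dist_eq] at this ⊢
  have h2 : HPF2 p c η / 2 - HPF2 p c 0 / 2 = (HPF2 p c η - HPF2 p c 0) / 2 := by ring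
  rw [h2, abs_div]
  have : |(2:ℝ)| = 2 := by norm_num
  rw [this]
  linarith

/-- Second-order expansion of the `H^p` norm of `1 + εz`: for every `p > 0`,
`((∫_𝕋 |1+εz|^p dμ(z))^{2/p} − 1)/ε² → p/2` as `ε → 0⁺`. -/
theorem hp_norm_expansion (p : ℝ) (hp : 0 < p) :
    Tendsto (fun ε : ℝ =>
        ((((1 / (2 * Real.pi)) *
              ∫ θ in (0 : ℝ)..(2 * Real.pi),
                ‖(1 : ℂ) + ε * Complex.exp (θ * Complex.I)‖ ^ p) ^ (2 / p) - 1) / ε ^ 2))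
      (nhdsWithin 0 (Ioi 0)) (nhds (p / 2)) := by
  have hpi : (0:ℝ) < Real.pi := Real.pi_pos
  have hpne : p ≠ 0 := hp.ne'
  set l : Filter ℝ := nhdsWithin 0 (Ioi 0) with hl
  -- Step 1: the integrand is `HPF p (cos θ) ε`
  have hnorm : ∀ (ε θ : ℝ),
      ‖(1 : ℂ) + ε * Complex.exp (θ * Complex.I)‖ ^ p = HPF p (Real.cos θ) ε := by
    intro ε θ
    have hre : ((1 : ℂ) + ε * Complex.exp (θ * Complex.I)).re = 1 + ε * Real.cos θ := by
      simp [Complex.add_re, Complex.mul_re, Complex.exp_ofReal_mul_I_re,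
        Complex.exp_ofReal_mul_I_im]
    have him : ((1 : ℂ) + ε * Complex.exp (θ * Complex.I)).im = ε * Real.sin θ := by
      simp [Complex.add_im, Complex.mul_im, Complex.exp_ofReal_mul_I_re,
        Complex.exp_ofReal_mul_I_im]
    have hS : Complex.normSq ((1 : ℂ) + ε * Complex.exp (θ * Complex.I))
        = HPb (Real.cos θ) ε := by
      rw [Complex.normSq_apply, hre, him]
      have := Real.sin_sq_add_cos_sq θ
      unfold HPb
      nlinarith [this]
    have hS0 : (0:ℝ) ≤ HPb (Real.cos θ) ε := hS ▸ Complex.normSq_nonneg _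
    have hnormeq : ‖(1 : ℂ) + ε * Complex.exp (θ * Complex.I)‖
        = Real.sqrt (HPb (Real.cos θ) ε) := by
      rw [Complex.norm_def, hS]
    rw [hnormeq, Real.sqrt_eq_rpow, ← Real.rpow_mul hS0]
    show HPb (Real.cos θ) ε ^ (1/2*p) = HPF p (Real.cos θ) ε
    unfold HPF
    congr 1
    ring
  -- continuity of the integrand
  have hcontF : ∀ (t : ℝ), |t| < 1 → Continuous (fun θ => HPF p (Real.cos θ) t) := by
    intro t ht
    rw [continuous_iff_continuousAt]; intro θ
    have hb : 0 < HPb (Real.cos θ) t := HPb_pos (Real.abs_cos_le_one θ) ht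
    have hbc : Continuous (fun θ => HPb (Real.cos θ) t) := by
      unfold HPb; fun_prop
    show ContinuousAt (fun θ => HPb (Real.cos θ) t ^ (p/2)) θ
    exact ContinuousAt.comp (g := fun x : ℝ => x ^ (p/2))
      (Real.continuousAt_rpow_const _ _ (Or.inl hb.ne')) hbc.continuousAt
  -- periodicity
  have hper : ∀ t : ℝ, Function.Periodic (fun θ => HPF p (Real.cos θ) t) (2*Real.pi) := by
    intro t θ; simp [Real.cos_add_two_pi]
  -- symmetrization
  have hsym : ∀ ε : ℝ, 0 < ε → ε < 1 →
      (∫ θ in (0:ℝ)..(2*Real.pi), HPF p (Real.cos θ) (-ε))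
        = ∫ θ in (0:ℝ)..(2*Real.pi), HPF p (Real.cos θ) ε := by
    intro ε h0 h1
    have hflip : ∀ θ : ℝ, HPF p (Real.cos θ) (-ε) = HPF p (Real.cos (θ + Real.pi)) ε := by
      intro θ
      rw [Real.cos_add_pi]
      unfold HPF HPb
      congr 1
      ring
    calc (∫ θ in (0:ℝ)..(2*Real.pi), HPF p (Real.cos θ) (-ε))
        = ∫ θ in (0:ℝ)..(2*Real.pi), HPF p (Real.cos (θ + Real.pi)) ε :=
          intervalIntegral.integral_congr (fun θ _ => hflip θ)
      _ = ∫ θ in (0+Real.pi:ℝ)..(2*Real.pi+Real.pi), HPF p (Real.cos θ) ε :=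
          intervalIntegral.integral_comp_add_right (fun θ => HPF p (Real.cos θ) ε) Real.pi
      _ = ∫ θ in (0:ℝ)..(2*Real.pi), HPF p (Real.cos θ) ε := by
          have h := (hper ε).intervalIntegral_add_eq Real.pi 0
          rw [zero_add] at h
          have heq : (0:ℝ)+Real.pi = Real.pi := by ring
          have heq2 : 2*Real.pi+Real.pi = Real.pi + 2*Real.pi := by ring
          rw [heq, heq2, h]
  -- dominated convergence
  have hDCT : Tendsto (fun ε => ∫ θ in (0:ℝ)..(2*Real.pi),
        (HPF p (Real.cos θ) ε + HPF p (Real.cos θ) (-ε) - 2)/(2*ε^2)) l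
      (nhds (∫ θ in (0:ℝ)..(2*Real.pi), (p + p*(p-2)*Real.cos θ^2)/2)) := by
    apply intervalIntegral.tendsto_integral_filter_of_dominated_convergence
      (bound := fun _ => (p * 4^|p/2-1| + p*|p-2| * 4 * 4^|p/2-2|)/2)
    · filter_upwards [Ioo_mem_nhdsGT (one_pos : (0:ℝ) < 1)] with ε hε
      have h1 := hcontF ε (by rw [abs_of_pos hε.1]; exact hε.2)
      have h2 := hcontF (-ε) (by rw [abs_neg, abs_of_pos hε.1]; exact hε.2)
      exact (((h1.add h2).sub continuous_const).div_const _).aestronglyMeasurable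
    · filter_upwards [Ioo_mem_nhdsGT (show (0:ℝ) < 1/2 by norm_num)] with ε hε
      refine MeasureTheory.ae_of_all _ fun θ _ => ?_
      obtain ⟨η, hη, heq⟩ := HP_MVT (p := p) (Real.abs_cos_le_one θ) hε.1
        (by linarith [hε.2])
      have hεne : ε ≠ 0 := ne_of_gt hε.1
      have hrw : (HPF p (Real.cos θ) ε + HPF p (Real.cos θ) (-ε) - 2)/(2*ε^2)
          = HPF2 p (Real.cos θ) η / 2 := by
        rw [heq]; field_simp
      rw [Real.norm_eq_abs, hrw, abs_div]
      have hb := HP_F2_bound hp (Real.abs_cos_le_one θ)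
        (show |η| ≤ 1/2 by linarith [hε.2])
      have h2 : |(2:ℝ)| = 2 := by norm_num
      rw [h2]
      linarith
    · exact intervalIntegrable_const
    · refine MeasureTheory.ae_of_all _ fun θ _ => ?_
      have h := HP_pointwise (p := p) (Real.abs_cos_le_one θ)
      rw [HPF2_zero] at h
      exact h
  -- value of the limit integral
  have hval : (∫ θ in (0:ℝ)..(2*Real.pi), (p + p*(p-2)*Real.cos θ^2)/2)
      = Real.pi * p^2/2 := by
    have hco : ∀ θ : ℝ, (p + p*(p-2)*Real.cos θ^2)/2
        = p/2 + (p*(p-2)/2) * Real.cos θ^2 := fun θ => by ring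
    rw [intervalIntegral.integral_congr (fun θ _ => hco θ)]
    rw [intervalIntegral.integral_add (g := fun θ => p*(p-2)/2 * Real.cos θ^2) intervalIntegrable_const
      ((continuous_const.mul (Real.continuous_cos.pow 2)).intervalIntegrable _ _)]
    rw [intervalIntegral.integral_const_mul, integral_cos_sq]
    simp [Real.sin_two_pi, Real.cos_two_pi]
    ring
  -- rewrite the symmetrized integral
  set I : ℝ → ℝ := fun ε => ∫ θ in (0:ℝ)..(2*Real.pi), HPF p (Real.cos θ) ε with hI
  have hsplit : ∀ ε : ℝ, 0 < ε → ε < 1 →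
      (∫ θ in (0:ℝ)..(2*Real.pi),
        (HPF p (Real.cos θ) ε + HPF p (Real.cos θ) (-ε) - 2)/(2*ε^2))
        = (I ε - 2*Real.pi) / ε^2 := by
    intro ε h0 h1
    have hεne : ε ≠ 0 := ne_of_gt h0
    have hi1 : IntervalIntegrable (fun θ => HPF p (Real.cos θ) ε)
        MeasureTheory.volume 0 (2*Real.pi) :=
      (hcontF ε (by rw [abs_of_pos h0]; exact h1)).intervalIntegrable _ _
    have hi2 : IntervalIntegrable (fun θ => HPF p (Real.cos θ) (-ε))
        MeasureTheory.volume 0 (2*Real.pi) :=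
      (hcontF (-ε) (by rw [abs_neg, abs_of_pos h0]; exact h1)).intervalIntegrable _ _
    rw [intervalIntegral.integral_div]
    rw [intervalIntegral.integral_sub (hi1.add hi2) intervalIntegrable_const]
    rw [intervalIntegral.integral_add hi1 hi2]
    rw [hsym ε h0 h1]
    rw [intervalIntegral.integral_const]
    simp only [hI, smul_eq_mul, sub_zero]
    field_simp
    ring
  have hItend : Tendsto (fun ε => (I ε - 2*Real.pi)/ε^2) l (nhds (Real.pi * p^2/2)) := by
    rw [← hval]
    apply hDCT.congr'
    filter_upwards [Ioo_mem_nhdsGT (one_pos : (0:ℝ) < 1)] with ε hε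
    exact hsplit ε hε.1 hε.2
  -- the normalized mean J
  set J : ℝ → ℝ := fun ε => (1 / (2 * Real.pi)) *
    ∫ θ in (0:ℝ)..(2*Real.pi), ‖(1 : ℂ) + ε * Complex.exp (θ * Complex.I)‖ ^ p with hJ
  have hJI : ∀ ε : ℝ, J ε = (1/(2*Real.pi)) * I ε := by
    intro ε
    simp only [hJ, hI]
    congr 1
    exact intervalIntegral.integral_congr (fun θ _ => hnorm ε θ)
  have hJtend : Tendsto (fun ε => (J ε - 1)/ε^2) l (nhds (p^2/4)) := by
    have h := hItend.const_mul (1/(2*Real.pi))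
    have hv : (1/(2*Real.pi)) * (Real.pi*p^2/2) = p^2/4 := by
      field_simp; ring
    rw [hv] at h
    apply h.congr'
    filter_upwards [self_mem_nhdsWithin] with ε hε
    have hε0 : (0:ℝ) < ε := hε
    have hεne : ε ≠ 0 := ne_of_gt hε0
    rw [hJI ε]
    field_simp
  have hJ1 : Tendsto J l (nhds 1) := by
    have hsq : Tendsto (fun ε : ℝ => ε^2) l (nhds 0) := by
      have h0 : Tendsto (fun ε : ℝ => ε^2) (nhds 0) (nhds 0) := by
        simpa using (continuous_pow 2).tendsto (0:ℝ)
      exact h0.mono_left nhdsWithin_le_nhds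
    have h := (hJtend.mul hsq).add_const 1
    have h' : Tendsto (fun ε => (J ε - 1)/ε^2 * ε^2 + 1) l (nhds 1) := by
      simpa using h
    apply h'.congr'
    filter_upwards [self_mem_nhdsWithin] with ε hε
    have hεne : (ε:ℝ) ≠ 0 := ne_of_gt hε
    field_simp; ring
  have hJgt : ∀ᶠ ε in l, 1 < J ε := by
    have hpos : ∀ᶠ ε in l, 0 < (J ε - 1)/ε^2 :=
      hJtend.eventually (eventually_gt_nhds (by nlinarith))
    filter_upwards [hpos, self_mem_nhdsWithin] with ε h1 h2
    have hε2 : (0:ℝ) < ε^2 := pow_pos h2 2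
    have := mul_pos h1 hε2
    rw [div_mul_cancel₀ _ (ne_of_gt hε2)] at this
    linarith
  -- slope of x ↦ x^(2/p) at 1
  have hd : HasDerivAt (fun x : ℝ => x ^ (2/p)) (2/p) 1 := by
    have h := Real.hasDerivAt_rpow_const (x := (1:ℝ)) (p := 2/p) (Or.inl one_ne_zero)
    simpa using h
  have hslopet : Tendsto (fun x : ℝ => (x ^ (2/p) - 1)/(x - 1))
      (nhdsWithin 1 {(1:ℝ)}ᶜ) (nhds (2/p)) := by
    have h := hasDerivAt_iff_tendsto_slope.mp hd
    apply h.congr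
    intro x
    rw [slope_def_field, Real.one_rpow]
  have hJne : Tendsto J l (nhdsWithin 1 {(1:ℝ)}ᶜ) := by
    apply tendsto_nhdsWithin_of_tendsto_nhds_of_eventually_within J hJ1
    filter_upwards [hJgt] with ε h
    exact ne_of_gt h
  have hmul := (hslopet.comp hJne).mul hJtend
  have hv2 : (2/p) * (p^2/4) = p/2 := by field_simp; ring
  rw [hv2] at hmul
  apply hmul.congr'
  filter_upwards [hJgt, self_mem_nhdsWithin] with ε h1 h2
  have hne : J ε - 1 ≠ 0 := sub_ne_zero.mpr (ne_of_gt h1)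
  have hε2 : (ε:ℝ)^2 ≠ 0 := pow_ne_zero 2 (ne_of_gt h2)
  show (J ε ^ (2/p) - 1)/(J ε - 1) * ((J ε - 1)/ε^2) = (J ε ^ (2/p) - 1)/ε^2
  field_simp
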